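/- Let f : ℝⁿ → ℝ be a lower semicontinuous level convex function and ξ₀ ∈ ℝⁿ. Then f is strictly level convex at ξ₀ in at least one direction if and only if ξ₀ belongs to the topological boundary of the sublevel set L_{f(ξ₀)}(f) := {ξ ∈ ℝⁿ : f(ξ) ≤ f(ξ₀)}. -/

import Mathlib

open Set

/-- A function on `ℝⁿ` is *level convex* if
`f (t ξ + (1-t) η) ≤ max (f ξ) (f η)` for all `ξ, η` and `t ∈ [0,1]`. -/
def LevelConvex {n : ℕ} (f : EuclideanSpace ℝ (Fin n) → ℝ) : Prop :=
  ∀ ξ η : EuclideanSpace ℝ (Fin n), ∀ t ∈ Set.Icc (0 : ℝ) 1,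
    f (t • ξ + (1 - t) • η) ≤ max (f ξ) (f η)

/-- A level convex `f : ℝⁿ → ℝ` is *strictly level convex at `ξ₀` in at least one
direction* if there is `α ≠ 0` such that whenever `ξ₀ = t γ + (1-t) η` with `t ∈ (0,1)`
and `f ξ₀ = max (f γ) (f η)`, one has `⟨γ - η, α⟩ = 0`. -/
def StrictLevelConvexAtInOneDirection {n : ℕ}
    (f : EuclideanSpace ℝ (Fin n) → ℝ) (ξ₀ : EuclideanSpace ℝ (Fin n)) : Prop :=
  ∃ α : EuclideanSpace ℝ (Fin n), α ≠ 0 ∧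
    ∀ (γ η : EuclideanSpace ℝ (Fin n)), ∀ t ∈ Set.Ioo (0 : ℝ) 1,
      ξ₀ = t • γ + (1 - t) • η → f ξ₀ = max (f γ) (f η) →
      (inner ℝ (γ - η) α : ℝ) = 0

/-- A lower semicontinuous level convex `f : ℝⁿ → ℝ` is strictly level convex at `ξ₀` in
at least one direction if and only if `ξ₀` belongs to the topological boundary of the
sublevel set `L_{f ξ₀}(f) = {ξ : f ξ ≤ f ξ₀}`. -/
theorem strictLevelConvexAtInOneDirection_iff_frontier {n : ℕ}
    (f : EuclideanSpace ℝ (Fin n) → ℝ) (hlsc : LowerSemicontinuous f)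
    (hlc : LevelConvex f) (ξ₀ : EuclideanSpace ℝ (Fin n)) :
    StrictLevelConvexAtInOneDirection f ξ₀ ↔
      ξ₀ ∈ frontier {ξ : EuclideanSpace ℝ (Fin n) | f ξ ≤ f ξ₀} := by
  set L : Set (EuclideanSpace ℝ (Fin n)) := {ξ | f ξ ≤ f ξ₀} with hL
  have hξ₀L : ξ₀ ∈ L := by simp only [hL, mem_setOf_eq]; exact le_refl _
  have hLclosed : IsClosed L := hlsc.isClosed_preimage (f ξ₀)
  have hLconv : Convex ℝ L := by
    intro x hx y hy a b ha hb hab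
    have hb' : b = 1 - a := by linarith
    subst hb'
    have h1 := hlc x y a ⟨ha, by linarith⟩
    calc f (a • x + (1 - a) • y) ≤ max (f x) (f y) := h1
      _ ≤ f ξ₀ := max_le hx hy
  rw [hLclosed.frontier_eq]
  constructor
  · rintro ⟨α, hα, hstrict⟩
    refine ⟨hξ₀L, fun hint => ?_⟩
    obtain ⟨ε, hε, hball⟩ := Metric.isOpen_iff.1 isOpen_interior ξ₀ hint
    have hαpos : (0 : ℝ) < ‖α‖ := norm_pos_iff.2 hα
    set δ : ℝ := ε / (2 * ‖α‖) with hδdef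
    have hδ : 0 < δ := by positivity
    set γ : EuclideanSpace ℝ (Fin n) := ξ₀ + δ • α with hγdef
    set η : EuclideanSpace ℝ (Fin n) := ξ₀ - δ • α with hηdef
    have hdist : δ * ‖α‖ < ε := by
      rw [hδdef]; rw [div_mul_eq_mul_div]
      rw [div_lt_iff₀ (by positivity)]
      nlinarith
    have hγ : γ ∈ L := by
      refine interior_subset (hball ?_)
      simp only [hγdef, Metric.mem_ball, dist_eq_norm, add_sub_cancel_left, norm_smul,
        Real.norm_eq_abs, abs_of_pos hδ]
      exact hdist
    have hη : η ∈ L := by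
      refine interior_subset (hball ?_)
      simp only [hηdef, Metric.mem_ball, dist_eq_norm, sub_sub_cancel_left, norm_neg, norm_smul,
        Real.norm_eq_abs, abs_of_pos hδ]
      exact hdist
    have hcomb : ξ₀ = (1/2 : ℝ) • γ + (1 - 1/2 : ℝ) • η := by
      rw [hγdef, hηdef]; module
    have hmax : f ξ₀ = max (f γ) (f η) := by
      refine le_antisymm ?_ (max_le hγ hη)
      have := hlc γ η (1/2) ⟨by norm_num, by norm_num⟩
      rwa [← hcomb] at this
    have h0 := hstrict γ η (1/2) ⟨by norm_num, by norm_num⟩ hcomb hmax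
    have hgη : γ - η = (2 * δ) • α := by rw [hγdef, hηdef]; module
    rw [hgη, real_inner_smul_left, real_inner_self_eq_norm_sq] at h0
    nlinarith [pow_pos hαpos 2, hδ]
  · rintro ⟨-, hnint⟩
    have key : ∃ α : EuclideanSpace ℝ (Fin n), α ≠ 0 ∧ ∀ x ∈ L, (inner ℝ (x - ξ₀) α : ℝ) ≤ 0 := by
      rcases eq_empty_or_nonempty (interior L) with hie | ⟨a, ha⟩
      · -- empty interior: L lies in a proper affine subspace
        have hspan : affineSpan ℝ L ≠ ⊤ := by
          intro h
          rw [← hLconv.interior_nonempty_iff_affineSpan_eq_top, hie] at h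
          exact not_nonempty_empty h
        have hdir : (affineSpan ℝ L).direction ≠ ⊤ := by
          intro h
          exact hspan ((AffineSubspace.direction_eq_top_iff_of_nonempty
            ⟨ξ₀, subset_affineSpan ℝ L hξ₀L⟩).1 h)
        have horth : (affineSpan ℝ L).directionᗮ ≠ ⊥ := by
          intro h; exact hdir (Submodule.orthogonal_eq_bot_iff.mp h)
        obtain ⟨α, hαmem, hα⟩ := Submodule.exists_mem_ne_zero_of_ne_bot horth
        refine ⟨α, hα, fun x hx => le_of_eq ?_⟩
        have hmem : x - ξ₀ ∈ (affineSpan ℝ L).direction := by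
          have := AffineSubspace.vsub_mem_direction (subset_affineSpan ℝ L hx)
            (subset_affineSpan ℝ L hξ₀L)
          simpa using this
        exact (Submodule.mem_orthogonal _ α).1 hαmem _ hmem
      · -- nonempty interior: separate `interior L` from `ξ₀`
        obtain ⟨φ, u, h1, h2⟩ := geometric_hahn_banach_open (hLconv.interior)
          isOpen_interior (convex_singleton ξ₀)
          (disjoint_singleton_right.2 hnint)
        have hu : u ≤ φ ξ₀ := h2 ξ₀ rfl
        have hLle : ∀ x ∈ L, φ x ≤ u := by
          intro x hx
          have hseg : ∀ t ∈ Set.Ioo (0 : ℝ) 1, t * φ a + (1 - t) * φ x < u := by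
            intro t ht
            have hmem : t • a + (1 - t) • x ∈ interior L :=
              hLconv.combo_interior_closure_mem_interior ha (subset_closure hx) ht.1
                (by linarith [ht.2]) (by ring)
            have := h1 _ hmem
            simpa [map_add, map_smul, smul_eq_mul] using this
          have htend : Filter.Tendsto (fun t : ℝ => t * φ a + (1 - t) * φ x)
              (nhdsWithin 0 (Set.Ioi 0)) (nhds (φ x)) := by
            have : Filter.Tendsto (fun t : ℝ => t * φ a + (1 - t) * φ x)
                (nhds 0) (nhds (0 * φ a + (1 - 0) * φ x)) :=
              ((continuous_id.mul continuous_const).add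
                ((continuous_const.sub continuous_id).mul continuous_const)).tendsto 0
            simpa using this.mono_left nhdsWithin_le_nhds
          refine le_of_tendsto htend ?_
          filter_upwards [Ioo_mem_nhdsGT_of_mem (by norm_num : (0:ℝ) ∈ Set.Ico 0 1)]
            with t ht using (hseg t ht).le
        set α : EuclideanSpace ℝ (Fin n) := (InnerProductSpace.toDual ℝ (EuclideanSpace ℝ (Fin n))).symm φ with hαdef
        have hinner : ∀ y : EuclideanSpace ℝ (Fin n), (inner ℝ α y : ℝ) = φ y := fun y =>
          InnerProductSpace.toDual_symm_apply
        have haφ : φ a < φ ξ₀ := lt_of_lt_of_le (h1 a ha) hu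
        have hα : α ≠ 0 := by
          intro h
          have h1' : φ a = 0 := by rw [← hinner a, h]; simp
          have h2' : φ ξ₀ = 0 := by rw [← hinner ξ₀, h]; simp
          rw [h1', h2'] at haφ; exact lt_irrefl _ haφ
        refine ⟨α, hα, fun x hx => ?_⟩
        rw [real_inner_comm, hinner (x - ξ₀), map_sub]
        have := hLle x hx
        linarith
    obtain ⟨α, hα, hsupp⟩ := key
    refine ⟨α, hα, fun γ η t ht hcomb hmax => ?_⟩
    have hγ : γ ∈ L := by
      simp only [hL, mem_setOf_eq, hmax]; exact le_max_left _ _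
    have hη : η ∈ L := by
      simp only [hL, mem_setOf_eq, hmax]; exact le_max_right _ _
    have e1 : γ - ξ₀ = (1 - t) • (γ - η) := by rw [hcomb]; module
    have e2 : η - ξ₀ = (-t) • (γ - η) := by rw [hcomb]; module
    have i1 := hsupp γ hγ
    have i2 := hsupp η hη
    rw [e1, real_inner_smul_left] at i1
    rw [e2, real_inner_smul_left] at i2
    obtain ⟨ht0, ht1⟩ := ht
    nlinarith
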